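/- Let S and A be finite nonempty sets, ρ and ρ̃ probability vectors on S×A with state marginals d(s) = Σ_a ρ(s,a) and d̃(s) = Σ_a ρ̃(s,a), and assume d(s) > 0 and d̃(s) > 0 for all s and that ρ̃(s,a)·d(s) = ρ(s,a)·d̃(s) for all (s,a) (the occupancy ratio depends only on the state). Let r : S×A → ℝ with r(s,a) > 0 for all (s,a), and let α > 0, ε > 0. If α·log((1/|S|)·Σ_s (d(s)/d̃(s))^{1/α}) ≤ ε, then Σ_{s,a} ρ̃(s,a)·r(s,a) ≥ exp( Σ_{s,a} ρ(s,a)·log r(s,a) + α·(H(d) − log|S|) − ε ). (Lower bound on performance under kernel uncertainty via state-entropy regularization.) -/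

import Mathlib

open Real Finset

/-- Jensen's inequality for `Real.log`. -/
lemma log_jensen {ι : Type*} (t : Finset ι) (w p : ι → ℝ)
    (hw : ∀ i ∈ t, 0 ≤ w i) (hw1 : ∑ i ∈ t, w i = 1)
    (hp : ∀ i ∈ t, 0 < p i) :
    ∑ i ∈ t, w i * Real.log (p i) ≤ Real.log (∑ i ∈ t, w i * p i) := by
  have := (strictConcaveOn_log_Ioi.concaveOn).le_map_sum (t := t) (w := w) (p := p)
    hw hw1 (fun i hi => hp i hi)
  simpa [smul_eq_mul] using this

/-- **Lower bound on performance under kernel uncertainty via state-entropy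
regularization.** If the perturbed occupancy `ρ̃` has the same conditional
action distribution as `ρ` and its state marginal is close to that of `ρ` in the
temperature-`α` divergence, then the perturbed return is lower bounded by
`exp(E_ρ[log r] + α (H(d) − log |S|) − ε)`. -/
theorem stmt_11 {S A : Type*} [Fintype S] [Nonempty S] [Fintype A] [Nonempty A]
    (ρ ρt : S → A → ℝ)
    (hρ0 : ∀ s a, 0 ≤ ρ s a) (hρ1 : ∑ s, ∑ a, ρ s a = 1)
    (hρt0 : ∀ s a, 0 ≤ ρt s a) (hρt1 : ∑ s, ∑ a, ρt s a = 1)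
    (d dt : S → ℝ)
    (hd : ∀ s, d s = ∑ a, ρ s a) (hdt : ∀ s, dt s = ∑ a, ρt s a)
    (hd0 : ∀ s, 0 < d s) (hdt0 : ∀ s, 0 < dt s)
    (hratio : ∀ s a, ρt s a * d s = ρ s a * dt s)
    (r : S → A → ℝ) (hr : ∀ s a, 0 < r s a)
    (α ε : ℝ) (hα : 0 < α) (hε : 0 < ε)
    (hcon : α * Real.log ((1 / (Fintype.card S : ℝ)) *
        ∑ s, (d s / dt s) ^ (1 / α)) ≤ ε) :
    ∑ s, ∑ a, ρt s a * r s a ≥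
      Real.exp ((∑ s, ∑ a, ρ s a * Real.log (r s a))
        + α * ((-∑ s, d s * Real.log (d s)) - Real.log (Fintype.card S)) - ε) := by
  classical
  set n : ℝ := (Fintype.card S : ℝ) with hn
  have hn0 : 0 < n := by
    rw [hn]
    exact_mod_cast Fintype.card_pos (α := S)
  have hd1 : ∑ s, d s = 1 := by
    rw [Finset.sum_congr rfl fun s _ => hd s]; exact hρ1
  have hρt_eq : ∀ s a, ρt s a = ρ s a * dt s / d s := by
    intro s a
    rw [eq_div_iff (hd0 s).ne']
    linarith [hratio s a]
  -- Step A : big Jensen over S × A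
  set T : ℝ := ∑ s, ∑ a, ρt s a * r s a with hT
  have hT0 : 0 < T := by
    rw [hT]
    have : ∃ s a, 0 < ρt s a := by
      by_contra h
      push_neg at h
      have : ∀ s a, ρt s a = 0 := fun s a => le_antisymm (h s a) (hρt0 s a)
      simp [this] at hρt1
    obtain ⟨s0, a0, h0⟩ := this
    have h1 : ∀ s ∈ Finset.univ, (0:ℝ) ≤ ∑ a, ρt s a * r s a := by
      intro s _
      exact Finset.sum_nonneg fun a _ => mul_nonneg (hρt0 s a) (hr s a).le
    refine Finset.sum_pos' h1 ⟨s0, Finset.mem_univ _, ?_⟩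
    refine Finset.sum_pos' (fun a _ => mul_nonneg (hρt0 s0 a) (hr s0 a).le)
      ⟨a0, Finset.mem_univ _, mul_pos h0 (hr s0 a0)⟩
  have hA : (∑ s, ∑ a, ρ s a * Real.log (r s a))
      + ∑ s, d s * Real.log (dt s / d s) ≤ Real.log T := by
    set w : S × A → ℝ := fun i => ρ i.1 i.2 with hw
    set p : S × A → ℝ := fun i => if ρ i.1 i.2 = 0 then 1 else dt i.1 / d i.1 * r i.1 i.2
      with hp
    have hw0 : ∀ i ∈ Finset.univ (α := S × A), 0 ≤ w i := fun i _ => hρ0 i.1 i.2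
    have hw1 : ∑ i : S × A, w i = 1 := by
      rw [Fintype.sum_prod_type]; exact hρ1
    have hp0 : ∀ i ∈ Finset.univ (α := S × A), 0 < p i := by
      intro i _
      simp only [hp]
      split
      · norm_num
      · exact mul_pos (div_pos (hdt0 i.1) (hd0 i.1)) (hr i.1 i.2)
    have key := log_jensen Finset.univ w p hw0 hw1 hp0
    have hsum : ∑ i : S × A, w i * p i = T := by
      rw [hT, Fintype.sum_prod_type]
      refine Finset.sum_congr rfl fun s _ => Finset.sum_congr rfl fun a _ => ?_
      simp only [hw, hp]
      by_cases h : ρ s a = 0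
      · have : ρt s a = 0 := by rw [hρt_eq, h]; ring
        simp [h, this]
      · rw [if_neg h, hρt_eq]
        field_simp
    have hlhs : ∑ i : S × A, w i * Real.log (p i)
        = (∑ s, ∑ a, ρ s a * Real.log (r s a)) + ∑ s, d s * Real.log (dt s / d s) := by
      rw [Fintype.sum_prod_type]
      rw [← Finset.sum_add_distrib]
      refine Finset.sum_congr rfl fun s _ => ?_
      have : d s * Real.log (dt s / d s) = ∑ a, ρ s a * Real.log (dt s / d s) := by
        rw [hd, Finset.sum_mul]
      rw [this, ← Finset.sum_add_distrib]
      refine Finset.sum_congr rfl fun a _ => ?_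
      simp only [hw, hp]
      by_cases h : ρ s a = 0
      · simp [h]
      · rw [if_neg h, Real.log_mul (div_pos (hdt0 s) (hd0 s)).ne' (hr s a).ne', mul_add]
        ring
    rw [hsum, hlhs] at key
    exact key
  -- Step B : bound the KL divergence
  have hB : ∑ s, d s * Real.log (d s / dt s)
      ≤ ε + α * Real.log n + α * ∑ s, d s * Real.log (d s) := by
    set x : S → ℝ := fun s => (d s / dt s) ^ (1 / α) with hx
    have hx0 : ∀ s, 0 < x s := fun s =>
      Real.rpow_pos_of_pos (div_pos (hd0 s) (hdt0 s)) _
    set q : S → ℝ := fun s => x s / (n * d s) with hq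
    have hq0 : ∀ s ∈ Finset.univ (α := S), 0 < q s := fun s _ =>
      div_pos (hx0 s) (mul_pos hn0 (hd0 s))
    have key := log_jensen Finset.univ d q (fun s _ => (hd0 s).le) hd1 hq0
    have hsum : ∑ s, d s * q s = (1 / n) * ∑ s, x s := by
      rw [Finset.mul_sum]
      refine Finset.sum_congr rfl fun s _ => ?_
      simp only [hq]
      field_simp [hn0.ne', (hd0 s).ne']
    rw [hsum] at key
    -- relate log (d/dt) to q
    have hlog : ∀ s, d s * Real.log (d s / dt s)
        = α * (d s * Real.log (q s)) + α * (d s * Real.log n) + α * (d s * Real.log (d s)) := by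
      intro s
      have h1 : Real.log (x s) = (1 / α) * Real.log (d s / dt s) :=
        Real.log_rpow (div_pos (hd0 s) (hdt0 s)) _
      have h2 : Real.log (q s) = Real.log (x s) - (Real.log n + Real.log (d s)) := by
        simp only [hq]
        rw [Real.log_div (hx0 s).ne' (mul_pos hn0 (hd0 s)).ne',
          Real.log_mul hn0.ne' (hd0 s).ne']
      rw [h2, h1]
      field_simp
      ring
    have : ∑ s, d s * Real.log (d s / dt s)
        = α * (∑ s, d s * Real.log (q s)) + α * Real.log n + α * ∑ s, d s * Real.log (d s) := by
      rw [Finset.sum_congr rfl fun s _ => hlog s]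
      rw [Finset.sum_add_distrib, Finset.sum_add_distrib, ← Finset.mul_sum, ← Finset.mul_sum,
        ← Finset.mul_sum]
      have : ∑ s, d s * Real.log n = Real.log n := by
        rw [← Finset.sum_mul, hd1, one_mul]
      rw [this]
    rw [this]
    have hjen : α * (∑ s, d s * Real.log (q s)) ≤ ε := by
      calc α * (∑ s, d s * Real.log (q s)) ≤ α * Real.log ((1 / n) * ∑ s, x s) :=
            mul_le_mul_of_nonneg_left key hα.le
        _ ≤ ε := hcon
    linarith
  -- Combine
  have hlogdiv : ∀ s, Real.log (dt s / d s) = - Real.log (d s / dt s) := by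
    intro s
    rw [Real.log_div (hdt0 s).ne' (hd0 s).ne', Real.log_div (hd0 s).ne' (hdt0 s).ne']
    ring
  have hC : (∑ s, ∑ a, ρ s a * Real.log (r s a))
      + α * ((-∑ s, d s * Real.log (d s)) - Real.log n) - ε ≤ Real.log T := by
    have h1 : ∑ s, d s * Real.log (dt s / d s) = - ∑ s, d s * Real.log (d s / dt s) := by
      rw [← Finset.sum_neg_distrib]
      exact Finset.sum_congr rfl fun s _ => by rw [hlogdiv s]; ring
    rw [h1] at hA
    nlinarith [hA, hB]
  calc Real.exp ((∑ s, ∑ a, ρ s a * Real.log (r s a))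
        + α * ((-∑ s, d s * Real.log (d s)) - Real.log n) - ε)
      ≤ Real.exp (Real.log T) := Real.exp_le_exp.mpr hC
    _ = T := Real.exp_log hT0
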